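/- arXiv:2009.03517 — 2 statements merged into one kernel-verified Lean document; each statement's English description precedes it below -/
import Mathlib

section
/- Let Q(P) = (1+√(1+P²))/P and define g₂(P) = ((2ρ₁₁ - 1)Q - ρ₂₁ Q² + ρ₁₂)/(1+Q²)². Then as P → 0, g₂(P) = -(1/4) ρ₂₁ P² - (1/8)(1 - 2ρ₁₁) P³ + O(P⁴). -/
open Complex Asymptotics Filter

noncomputable def haux (ρ11 : ℝ) (ρ12 ρ21 : ℂ) (P : ℝ) : ℂ :=
  (2 * ρ21 * ((Real.sqrt (1 + P ^ 2) : ℂ) + 1) ^ 2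
      + (1 - 2 * (ρ11 : ℂ)) * P * ((Real.sqrt (1 + P ^ 2) : ℂ) ^ 2 + 2 * (Real.sqrt (1 + P ^ 2) : ℂ) + 2)
      + 2 * ρ12)
    / (8 * (Real.sqrt (1 + P ^ 2) : ℂ) ^ 2 * ((Real.sqrt (1 + P ^ 2) : ℂ) + 1) ^ 2)

lemma key (ρ11 : ℝ) (ρ12 ρ21 : ℂ) (P : ℝ) (hP : P ≠ 0) :
    ((2 * (ρ11:ℂ) - 1) * (((1 + Real.sqrt (1 + P ^ 2)) / P : ℝ) : ℂ)
        - ρ21 * (((1 + Real.sqrt (1 + P ^ 2)) / P : ℝ) : ℂ) ^ 2 + ρ12)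
      / (1 + (((1 + Real.sqrt (1 + P ^ 2)) / P : ℝ) : ℂ) ^ 2) ^ 2
      - (-(1 / 4) * ρ21 * (P : ℂ) ^ 2 - (1 / 8) * (1 - 2 * ρ11) * (P : ℂ) ^ 3)
    = (P : ℂ) ^ 4 * haux ρ11 ρ12 ρ21 P := by
  have hrpos : (0:ℝ) < Real.sqrt (1 + P ^ 2) := Real.sqrt_pos.2 (by positivity)
  have hrsq : Real.sqrt (1 + P ^ 2) ^ 2 = 1 + P ^ 2 := Real.sq_sqrt (by positivity)
  set r : ℝ := Real.sqrt (1 + P ^ 2) with hr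
  have hs2 : (r : ℂ) ^ 2 = 1 + (P : ℂ) ^ 2 := by exact_mod_cast hrsq
  have hsne : (r : ℂ) ≠ 0 := Complex.ofReal_ne_zero.2 (ne_of_gt hrpos)
  have hs1ne : (r : ℂ) + 1 ≠ 0 := by
    have : ((r + 1 : ℝ) : ℂ) ≠ 0 := Complex.ofReal_ne_zero.2 (by positivity)
    push_cast at this; exact this
  have hPne : (P : ℂ) ≠ 0 := Complex.ofReal_ne_zero.2 hP
  have hden2 : (P:ℂ) ^ 2 + (1 + (r:ℂ)) ^ 2 ≠ 0 := by
    have h0 : ((P ^ 2 + (1 + r) ^ 2 : ℝ) : ℂ) ≠ 0 := Complex.ofReal_ne_zero.2 (by positivity)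
    push_cast at h0
    convert h0 using 1
  unfold haux
  rw [← hr]
  push_cast
  field_simp [hden2]
  linear_combination ((-8:ℂ) * (r:ℂ)^6 * (P:ℂ) * (ρ11:ℂ) + (4:ℂ) * (r:ℂ)^6 * (P:ℂ) + (8:ℂ) * (r:ℂ)^6 * ρ21 + (-48:ℂ) * (r:ℂ)^5 * (P:ℂ) * (ρ11:ℂ) + (24:ℂ) * (r:ℂ)^5 * (P:ℂ) + (48:ℂ) * (r:ℂ)^5 * ρ21 + (-16:ℂ) * (r:ℂ)^4 * (P:ℂ)^3 * (ρ11:ℂ) + (8:ℂ) * (r:ℂ)^4 * (P:ℂ)^3 + (16:ℂ) * (r:ℂ)^4 * (P:ℂ)^2 * ρ21 + (-128:ℂ) * (r:ℂ)^4 * (P:ℂ) * (ρ11:ℂ) + (64:ℂ) * (r:ℂ)^4 * (P:ℂ) + (96:ℂ) * (r:ℂ)^4 * ρ21 + (-64:ℂ) * (r:ℂ)^3 * (P:ℂ)^3 * (ρ11:ℂ) + (32:ℂ) * (r:ℂ)^3 * (P:ℂ)^3 + (64:ℂ) * (r:ℂ)^3 * (P:ℂ)^2 * ρ21 + (-144:ℂ)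 * (r:ℂ)^3 * (P:ℂ) * (ρ11:ℂ) + (72:ℂ) * (r:ℂ)^3 * (P:ℂ) + (80:ℂ) * (r:ℂ)^3 * ρ21 + (-8:ℂ) * (r:ℂ)^2 * (P:ℂ)^5 * (ρ11:ℂ) + (4:ℂ) * (r:ℂ)^2 * (P:ℂ)^5 + (8:ℂ) * (r:ℂ)^2 * (P:ℂ)^4 * ρ21 + (-112:ℂ) * (r:ℂ)^2 * (P:ℂ)^3 * (ρ11:ℂ) + (56:ℂ) * (r:ℂ)^2 * (P:ℂ)^3 + (24:ℂ) * (r:ℂ)^2 * (P:ℂ)^2 * ρ12 + (88:ℂ) * (r:ℂ)^2 * (P:ℂ)^2 * ρ21 + (-56:ℂ) * (r:ℂ)^2 * (P:ℂ) * (ρ11:ℂ) + (28:ℂ) * (r:ℂ)^2 * (P:ℂ) + (24:ℂ) * (r:ℂ)^2 * ρ21 + (-16:ℂ) * (r:ℂ) * (P:ℂ)^5 * (ρ11:ℂ) + (8:ℂ) * (r:ℂ) * (P:ℂ)^5 + (16:ℂ) * (r:ℂ) * (P:ℂ)^4 * ρ21 + (-80:ℂ) * (r:ℂ) * (P:ℂ)^3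 * (ρ11:ℂ) + (40:ℂ) * (r:ℂ) * (P:ℂ)^3 + (32:ℂ) * (r:ℂ) * (P:ℂ)^2 * ρ12 + (48:ℂ) * (r:ℂ) * (P:ℂ)^2 * ρ21 + (-16:ℂ) * (P:ℂ)^5 * (ρ11:ℂ) + (8:ℂ) * (P:ℂ)^5 + (8:ℂ) * (P:ℂ)^4 * ρ12 + (8:ℂ) * (P:ℂ)^4 * ρ21 + (-16:ℂ) * (P:ℂ)^3 * (ρ11:ℂ) + (8:ℂ) * (P:ℂ)^3 + (8:ℂ) * (P:ℂ)^2 * ρ12 + (8:ℂ) * (P:ℂ)^2 * ρ21) * hs2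

/-- Taylor expansion of g₂ at P = 0. -/
theorem stmt_8 (ρ11 : ℝ) (ρ12 ρ21 : ℂ)
    (Q : ℝ → ℝ) (hQ : ∀ P : ℝ, Q P = (1 + Real.sqrt (1 + P ^ 2)) / P)
    (g2 : ℝ → ℂ)
    (hg2 : ∀ P : ℝ, g2 P =
      ((2 * ρ11 - 1) * (Q P : ℂ) - ρ21 * (Q P : ℂ) ^ 2 + ρ12) / (1 + (Q P : ℂ) ^ 2) ^ 2) :
    (fun P : ℝ => g2 P - (-(1 / 4) * ρ21 * (P : ℂ) ^ 2 - (1 / 8) * (1 - 2 * ρ11) * (P : ℂ) ^ 3))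
      =O[nhdsWithin (0 : ℝ) {0}ᶜ] (fun P : ℝ => P ^ 4) := by
  have hcont : ContinuousAt (haux ρ11 ρ12 ρ21) 0 := by
    have hs : ContinuousAt (fun P : ℝ => (Real.sqrt (1 + P ^ 2) : ℂ)) 0 := by
      apply Complex.continuous_ofReal.continuousAt.comp
      exact (Real.continuous_sqrt.comp (by continuity)).continuousAt
    unfold haux
    apply ContinuousAt.div
    · fun_prop
    · fun_prop
    · norm_num [Real.sqrt_one]
  have heq : (fun P : ℝ => g2 P -
      (-(1 / 4) * ρ21 * (P : ℂ) ^ 2 - (1 / 8) * (1 - 2 * ρ11) * (P : ℂ) ^ 3))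
      =ᶠ[nhdsWithin (0 : ℝ) {0}ᶜ] fun P => (P : ℂ) ^ 4 * haux ρ11 ρ12 ρ21 P := by
    filter_upwards [self_mem_nhdsWithin] with P hP
    rw [hg2, hQ]
    exact key ρ11 ρ12 ρ21 P hP
  refine heq.trans_isBigO ?_
  have h1 : (fun P : ℝ => ((P : ℂ)) ^ 4) =O[nhdsWithin (0 : ℝ) {0}ᶜ] (fun P : ℝ => P ^ 4) := by
    apply Asymptotics.IsBigO.of_bound 1
    filter_upwards with P
    simp
  have h2 : haux ρ11 ρ12 ρ21 =O[nhdsWithin (0 : ℝ) {0}ᶜ] (fun _ => (1 : ℝ)) :=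
    (hcont.tendsto.mono_left nhdsWithin_le_nhds).isBigO_one ℝ
  simpa using h1.mul h2
end

section
/- With h, g₁, g₂ defined as above from Q(P) = (1+√(1+P²))/P, one has for real P → 0: g₁(P) = -4·conj(g₂(P))/P² + O(P²) and g₁(P) = -2 h(P)/P + O(P²), where ρ₂₁ = conj(ρ₁₂) and ρ₁₁ ∈ ℝ. -/
open Complex Asymptotics Filter

set_option maxHeartbeats 1000000 in
/-- relations between g₁, g₂ and h as P → 0, with ρ₂₁ = conj ρ₁₂. -/
theorem stmt_9 (ρ11 : ℝ) (hρ11 : 0 ≤ ρ11 ∧ ρ11 ≤ 1) (ρ12 ρ21 : ℂ)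
    (hconj : ρ21 = (starRingEnd ℂ) ρ12)
    (Q : ℝ → ℝ) (hQ : ∀ P : ℝ, Q P = (1 + Real.sqrt (1 + P ^ 2)) / P)
    (h g1 g2 : ℝ → ℂ)
    (hh : ∀ P : ℝ, h P = (Q P : ℂ) *
      ((2 * ρ11 - 1) * (Q P : ℂ) + ρ21 - ρ12 * (Q P : ℂ) ^ 2) / (1 + (Q P : ℂ) ^ 2) ^ 2)
    (hg1 : ∀ P : ℝ, g1 P = -(Q P : ℂ) ^ 2 *
      ((2 * ρ11 - 1) * (Q P : ℂ) - ρ21 - ρ12 * (Q P : ℂ) ^ 2) / (1 + (Q P : ℂ) ^ 2) ^ 2)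
    (hg2 : ∀ P : ℝ, g2 P =
      ((2 * ρ11 - 1) * (Q P : ℂ) - ρ21 * (Q P : ℂ) ^ 2 + ρ12) / (1 + (Q P : ℂ) ^ 2) ^ 2) :
    ((fun P : ℝ => g1 P - (-4 * (starRingEnd ℂ) (g2 P) / (P : ℂ) ^ 2))
      =O[nhdsWithin (0 : ℝ) {0}ᶜ] (fun P : ℝ => P ^ 2)) ∧
    ((fun P : ℝ => g1 P - (-2 * h P / (P : ℂ)))
      =O[nhdsWithin (0 : ℝ) {0}ᶜ] (fun P : ℝ => P ^ 2)) := by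
  set r : ℝ := ‖ρ12‖ with hrdef
  have hr0 : 0 ≤ r := norm_nonneg _
  have hr21 : ‖ρ21‖ = r := by rw [hconj]; exact RCLike.norm_conj _
  have ha : |2 * ρ11 - 1| ≤ 1 := by
    rw [abs_le]; constructor <;> [linarith [hρ11.1]; linarith [hρ11.2]]
  have key : ∀ P : ℝ, P ≠ 0 →
      ‖g1 P - (-4 * (starRingEnd ℂ) (g2 P) / (P : ℂ) ^ 2)‖ ≤ (2 + 4*r)/4 * ‖P ^ 2‖ ∧
      ‖g1 P - (-2 * h P / (P : ℂ))‖ ≤ (2 + 4*r)/4 * ‖P ^ 2‖ := by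
    intro P hP
    set s : ℝ := Real.sqrt (1 + P ^ 2) with hsdef
    have hs2 : s ^ 2 = 1 + P ^ 2 := Real.sq_sqrt (by positivity)
    have hs0 : 0 ≤ s := Real.sqrt_nonneg _
    have hs1 : 1 ≤ s := by nlinarith
    set q : ℝ := Q P with hqdef
    have hq : q = (1 + s) / P := hQ P
    have hqP : q * P = 1 + s := by rw [hq]; field_simp
    have i1 : q ^ 2 * P ^ 2 = (1 + s) ^ 2 := by rw [hq]; field_simp
    have i2 : (1 + q ^ 2) * P ^ 2 = 2 * s * (1 + s) := by linear_combination i1 - hs2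
    have i2' : 4 ≤ (1 + q ^ 2) * P ^ 2 := by nlinarith
    have hP2 : 0 < P ^ 2 := by positivity
    have hu : 0 < 1 + q ^ 2 := by positivity
    have i3 : q ^ 2 * P = 2 * q + P := by
      have h3 : (q ^ 2 * P - 2 * q - P) * P = 0 := by
        linear_combination i1 - 2 * hqP + hs2
      rcases mul_eq_zero.mp h3 with h' | h'
      · linarith
      · exact absurd h' hP
    obtain ⟨t, ht⟩ : ∃ t : ℝ, t * (s + 1) = s + 3 := ⟨(s+3)/(s+1), by field_simp⟩
    have ht0 : 0 ≤ t := by nlinarith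
    have ht2 : t ≤ 2 := by nlinarith
    have i4 : q ^ 2 * P ^ 2 = 4 + t * P ^ 2 := by
      linear_combination i1 + t * hs2 - (s - 1) * ht
    -- complex versions
    set Qc : ℂ := (q : ℂ) with hQcdef
    set Pc : ℂ := (P : ℂ) with hPcdef
    set tc : ℂ := (t : ℂ) with htcdef
    have hPc : Pc ≠ 0 := Complex.ofReal_ne_zero.mpr hP
    have ci3 : Qc ^ 2 * Pc = 2 * Qc + Pc := by
      rw [hQcdef, hPcdef]; exact_mod_cast congrArg (Complex.ofReal) i3
    have ci4 : Qc ^ 2 * Pc ^ 2 = 4 + tc * Pc ^ 2 := by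
      rw [hQcdef, hPcdef, htcdef]; exact_mod_cast congrArg (Complex.ofReal) i4
    have hD : ((1 : ℂ) + Qc ^ 2) ≠ 0 := by
      rw [hQcdef]
      intro hcon
      have : ((1 + q ^ 2 : ℝ) : ℂ) = 0 := by push_cast; linear_combination hcon
      have := Complex.ofReal_eq_zero.mp this
      linarith
    have hDn : ‖((1 : ℂ) + Qc ^ 2) ^ 2‖ = (1 + q ^ 2) ^ 2 := by
      rw [show ((1 : ℂ) + Qc ^ 2) ^ 2 = (((1 + q ^ 2) ^ 2 : ℝ) : ℂ) by rw [hQcdef]; push_cast; ring]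
      rw [Complex.norm_real, Real.norm_eq_abs]
      exact _root_.abs_of_nonneg (by positivity)
    -- norms of pieces
    have hQn : ‖Qc‖ = |q| := by rw [hQcdef, Complex.norm_real, Real.norm_eq_abs]
    have han : ‖(2 * (ρ11 : ℂ) - 1)‖ ≤ 1 := by
      rw [show (2 * (ρ11 : ℂ) - 1) = ((2 * ρ11 - 1 : ℝ) : ℂ) by push_cast; ring,
        Complex.norm_real, Real.norm_eq_abs]
      exact ha
    have habsq : |q| ≤ 1 + q ^ 2 := by nlinarith [_root_.sq_abs q, abs_nonneg q]
    -- conj g2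
    have hcg2 : (starRingEnd ℂ) (g2 P) =
        ((2 * ρ11 - 1) * Qc - ρ12 * Qc ^ 2 + ρ21) / (1 + Qc ^ 2) ^ 2 := by
      rw [hg2, hconj]
      simp only [map_div₀, map_add, map_sub, map_mul, map_pow, map_one, map_ofNat,
        Complex.conj_conj, Complex.conj_ofReal]
      rfl
    -- closed forms
    have e1 : g1 P - (-4 * (starRingEnd ℂ) (g2 P) / Pc ^ 2) =
        (-tc * ((2 * ρ11 - 1) * Qc - ρ12 * Qc ^ 2) + (2 * Qc ^ 2 - tc) * ρ21)
          / (1 + Qc ^ 2) ^ 2 := by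
      rw [hg1, hcg2]
      have step : (-Qc ^ 2 * ((2 * ρ11 - 1) * Qc - ρ21 - ρ12 * Qc ^ 2)
          + 4 * (((2 * ρ11 - 1) * Qc - ρ12 * Qc ^ 2 + ρ21)) / Pc ^ 2)
          = (-tc * ((2 * ρ11 - 1) * Qc - ρ12 * Qc ^ 2) + (2 * Qc ^ 2 - tc) * ρ21) := by
        field_simp
        linear_combination (-((2 * (ρ11:ℂ) - 1) * Qc - ρ12 * Qc ^ 2 + ρ21)) * ci4
      rw [← step]; ring
    have e2 : g1 P - (-2 * h P / Pc) =
        (ρ12 * Qc ^ 2 - (2 * ρ11 - 1) * Qc + (2 * Qc ^ 2 - 1) * ρ21) / (1 + Qc ^ 2) ^ 2 := by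
      rw [hg1, hh]
      have step : (-Qc ^ 2 * ((2 * ρ11 - 1) * Qc - ρ21 - ρ12 * Qc ^ 2)
          + 2 * (Qc * ((2 * ρ11 - 1) * Qc + ρ21 - ρ12 * Qc ^ 2)) / Pc)
          = (ρ12 * Qc ^ 2 - (2 * ρ11 - 1) * Qc + (2 * Qc ^ 2 - 1) * ρ21) := by
        field_simp
        linear_combination (ρ12 * Qc ^ 2 - (2 * (ρ11:ℂ) - 1) * Qc - ρ21) * ci3
      rw [← step]; ring
    have hnormP2 : ‖P ^ 2‖ = P ^ 2 := by
      rw [Real.norm_eq_abs]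
      exact _root_.abs_of_nonneg (by positivity)
    constructor
    · -- first bound
      rw [e1, norm_div, hDn]
      have hN1 : ‖-tc * ((2 * ρ11 - 1) * Qc - ρ12 * Qc ^ 2) + (2 * Qc ^ 2 - tc) * ρ21‖
          ≤ (2 + 4*r) * (1 + q ^ 2) := by
        have b1 : ‖(2 * (ρ11:ℂ) - 1) * Qc - ρ12 * Qc ^ 2‖ ≤ |q| + r * q ^ 2 := by
          calc ‖(2 * (ρ11:ℂ) - 1) * Qc - ρ12 * Qc ^ 2‖
              ≤ ‖(2 * (ρ11:ℂ) - 1) * Qc‖ + ‖ρ12 * Qc ^ 2‖ := norm_sub_le _ _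
            _ ≤ 1 * |q| + r * q ^ 2 := by
                rw [norm_mul, norm_mul, norm_pow, hQn, _root_.sq_abs]
                gcongr
            _ = |q| + r * q ^ 2 := by ring
        have b2 : ‖(2 : ℂ) * Qc ^ 2 - tc‖ ≤ 2 * q ^ 2 + 2 := by
          rw [show (2 : ℂ) * Qc ^ 2 - tc = ((2 * q ^ 2 - t : ℝ) : ℂ) by
            rw [hQcdef, htcdef]; push_cast; ring, Complex.norm_real, Real.norm_eq_abs]
          rw [abs_le]; constructor <;> nlinarith [sq_nonneg q]
        have btc : ‖tc‖ ≤ 2 := by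
          rw [htcdef, Complex.norm_real, Real.norm_eq_abs, _root_.abs_of_nonneg ht0]; exact ht2
        calc ‖-tc * ((2 * ρ11 - 1) * Qc - ρ12 * Qc ^ 2) + (2 * Qc ^ 2 - tc) * ρ21‖
            ≤ ‖-tc * ((2 * ρ11 - 1) * Qc - ρ12 * Qc ^ 2)‖ + ‖(2 * Qc ^ 2 - tc) * ρ21‖ :=
              norm_add_le _ _
          _ = ‖tc‖ * ‖(2 * (ρ11:ℂ) - 1) * Qc - ρ12 * Qc ^ 2‖ + ‖(2:ℂ) * Qc ^ 2 - tc‖ * r := by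
              rw [norm_mul, norm_neg, norm_mul, hr21]
          _ ≤ 2 * (|q| + r * q ^ 2) + (2 * q ^ 2 + 2) * r := by
              gcongr
          _ ≤ (2 + 4*r) * (1 + q ^ 2) := by nlinarith [sq_nonneg q]
      rw [hnormP2, div_le_iff₀ (by positivity)]
      refine hN1.trans ?_
      nlinarith [mul_le_mul_of_nonneg_left i2' (by positivity : (0:ℝ) ≤ (2 + 4*r) * (1 + q ^ 2))]
    · -- second bound
      rw [e2, norm_div, hDn]
      have hN2 : ‖ρ12 * Qc ^ 2 - (2 * ρ11 - 1) * Qc + (2 * Qc ^ 2 - 1) * ρ21‖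
          ≤ (2 + 4*r) * (1 + q ^ 2) := by
        have b2 : ‖(2 : ℂ) * Qc ^ 2 - 1‖ ≤ 2 * q ^ 2 + 1 := by
          rw [show (2 : ℂ) * Qc ^ 2 - 1 = ((2 * q ^ 2 - 1 : ℝ) : ℂ) by
            rw [hQcdef]; push_cast; ring, Complex.norm_real, Real.norm_eq_abs]
          rw [abs_le]; constructor <;> nlinarith [sq_nonneg q]
        calc ‖ρ12 * Qc ^ 2 - (2 * ρ11 - 1) * Qc + (2 * Qc ^ 2 - 1) * ρ21‖
            ≤ ‖ρ12 * Qc ^ 2 - (2 * ρ11 - 1) * Qc‖ + ‖(2 * Qc ^ 2 - 1) * ρ21‖ := norm_add_le _ _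
          _ ≤ (‖ρ12 * Qc ^ 2‖ + ‖(2 * (ρ11:ℂ) - 1) * Qc‖) + ‖(2:ℂ) * Qc ^ 2 - 1‖ * r := by
              rw [norm_mul, hr21]
              gcongr
              exact norm_sub_le _ _
          _ ≤ (r * q ^ 2 + 1 * |q|) + (2 * q ^ 2 + 1) * r := by
              rw [norm_mul, norm_mul, norm_pow, hQn, _root_.sq_abs]
              gcongr
          _ ≤ (2 + 4*r) * (1 + q ^ 2) := by nlinarith [sq_nonneg q]
      rw [hnormP2, div_le_iff₀ (by positivity)]
      refine hN2.trans ?_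
      nlinarith [mul_le_mul_of_nonneg_left i2' (by positivity : (0:ℝ) ≤ (2 + 4*r) * (1 + q ^ 2))]
  constructor
  · rw [isBigO_iff]
    exact ⟨(2 + 4*r)/4, by
      filter_upwards [self_mem_nhdsWithin] with P hP
      exact (key P hP).1⟩
  · rw [isBigO_iff]
    exact ⟨(2 + 4*r)/4, by
      filter_upwards [self_mem_nhdsWithin] with P hP
      exact (key P hP).2⟩
end
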